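/- Let w ∈ αΣ* ∩ Σ*‾α be a non-α-crossing word with |P_α(w)| ≥ 2 and |S_‾α(w)| ≥ 2. Then the set of words obtainable from w by one hairpin completion (together with w itself) equals {w} ∪ w·‾(P_α(w)) ∪ ‾(S_‾α(w))·w, where w·‾(P_α(w)) = {w‾u : u ∈ P_α(w)} and ‾(S_‾α(w))·w = {vw : ‾v ∈ S_‾α(w)}. -/

import Mathlib

open List

namespace Hairpin

variable {S : Type} [DecidableEq S]

/-- Antimorphic extension of an involution to words. -/
def comp (bar : S → S) (w : List S) : List S := (w.map bar).reverse

/-- Right hairpin completion w.r.t. primer `a`. -/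
def RH (bar : S → S) (a w z : List S) : Prop :=
  ∃ γ β : List S, w = γ ++ a ++ β ++ comp bar a ∧ z = w ++ comp bar γ

/-- Left hairpin completion w.r.t. primer `a`. -/
def LH (bar : S → S) (a w z : List S) : Prop :=
  ∃ γ β : List S, w = a ++ β ++ comp bar a ++ comp bar γ ∧ z = γ ++ w

/-- One hairpin completion step. -/
def HC (bar : S → S) (a w z : List S) : Prop := RH bar a w z ∨ LH bar a w z

/-- Iterated hairpin completion `H*_α(w)`. -/
def HCstar (bar : S → S) (a w : List S) : Set (List S) :=
  { z | Relation.ReflTransGen (HC bar a) w z }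

/-- `w` is non-`a`-crossing: every occurrence of `a` starts no later than
every occurrence of `comp bar a`. -/
def NonCrossing (bar : S → S) (a w : List S) : Prop :=
  ∀ i j : ℕ, a <+: w.drop i → comp bar a <+: w.drop j → i ≤ j

/-- The set of `a`-prefixes of `w`. -/
def Pa (a w : List S) : Set (List S) := { u | u ++ a <+: w }

/-- The set of `‾a`-suffixes of `w` (the elements are the words `‾v`). -/
def Sa (bar : S → S) (a w : List S) : Set (List S) :=
  { x | comp bar a ++ x <:+ w }

/-- The set of complements of `‾a`-suffixes of `w`, i.e. `‾(S_‾α(w))`. -/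
def barSa (bar : S → S) (a w : List S) : Set (List S) :=
  { v | comp bar a ++ comp bar v <:+ w }

/-- Kleene star of a set of words: all finite concatenations. -/
def star (X : Set (List S)) : Set (List S) :=
  { x | ∃ l : List (List S), (∀ y ∈ l, y ∈ X) ∧ x = l.flatten }

/-- `ind_α(x)`: the number of occurrences of `a` in `x ++ a` other than the
suffix occurrence, i.e. the number of positions `i < |x|` where `a` occurs. -/
def inda (a x : List S) : ℕ :=
  ((Finset.range x.length).filter (fun i => a <+: (x ++ a).drop i)).card

/-! ### Auxiliary lemmas -/

lemma comp_append (bar : S → S) (x y : List S) :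
    comp bar (x ++ y) = comp bar y ++ comp bar x := by
  simp [comp]

lemma comp_length (bar : S → S) (x : List S) : (comp bar x).length = x.length := by
  simp [comp]

lemma comp_comp (bar : S → S) (hbar : Function.Involutive bar) (x : List S) :
    comp bar (comp bar x) = x := by
  simp [comp, List.map_reverse, List.map_map, hbar.comp_self]

lemma comp_take (bar : S → S) (x : List S) (k : ℕ) :
    comp bar (x.take k) = (comp bar x).drop (x.length - k) := by
  simp only [comp, List.map_take, List.reverse_take, List.length_map]

lemma comp_drop (bar : S → S) (x : List S) (k : ℕ) :
    comp bar (x.drop k) = (comp bar x).take (x.length - k) := by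
  simp only [comp, List.map_drop, List.reverse_drop, List.length_map]

lemma occ_flip (bar : S → S) {u w : List S} {i : ℕ} (h : u <+: w.drop i) :
    comp bar u <+: (comp bar w).drop (w.length - i - u.length) := by
  obtain ⟨r, hr⟩ := h
  have hw : w = w.take i ++ u ++ r := by
    conv_lhs => rw [← List.take_append_drop i w]
    rw [← hr, List.append_assoc]
  have hlen : w.length - i - u.length = r.length := by
    have := congrArg List.length hr
    simp only [List.length_drop, List.length_append] at this
    omega
  have hcw : comp bar w = comp bar r ++ comp bar u ++ comp bar (w.take i) := by
    conv_lhs => rw [hw]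
    simp [comp_append, List.append_assoc]
  rw [hlen, hcw, List.append_assoc, ← comp_length bar r, List.drop_left]
  exact ⟨comp bar (w.take i), rfl⟩

lemma prefix_eq_of_length {x y w : List S} (hx : x <+: w) (hy : y <+: w)
    (h : x.length = y.length) : x = y := by
  rw [List.prefix_iff_eq_take] at hx hy
  rw [hx, hy, h]

lemma suffix_eq_of_length {x y w : List S} (hx : x <:+ w) (hy : y <:+ w)
    (h : x.length = y.length) : x = y := by
  rw [List.suffix_iff_eq_drop] at hx hy
  rw [hx, hy, h]

/-- Key step: if `a` occurs at `i` overlapping the occurrence of `‾a` at `J`,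
and `‾a` also occurs at `J' < J` with `i ≤ J'`, then `a` also occurs at
`i + (J - J')`. -/
lemma step (bar : S → S) (hbar : Function.Involutive bar) {a w : List S} {i J' J : ℕ}
    (hi : a <+: w.drop i) (hJ' : comp bar a <+: w.drop J') (hJ : comp bar a <+: w.drop J)
    (hiJ' : i ≤ J') (hJ'J : J' < J) (hover : J < i + a.length) :
    a <+: w.drop (i + (J - J')) := by
  have hnpos : 0 < a.length := by omega
  have hJn : J + a.length ≤ w.length := by
    have h1 := hJ.length_le
    simp only [comp_length, List.length_drop] at h1
    omega
  set n := a.length with hn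
  set l := w.drop i with hl
  set d := J - i with hd
  set p := J' - i with hp
  have hdn : d < n := by omega
  have hpd : p < d := by omega
  have hll : l.length = w.length - i := by simp [hl]
  have hta : l.take n = a := (List.prefix_iff_eq_take.mp hi).symm
  have hdJ : w.drop J = l.drop d := by
    rw [hl, List.drop_drop, show i + d = J from by omega]
  have hdJ' : w.drop J' = l.drop p := by
    rw [hl, List.drop_drop, show i + p = J' from by omega]
  have htca : (w.drop J).take n = comp bar a := by
    have h1 := (List.prefix_iff_eq_take.mp hJ).symm
    rwa [comp_length] at h1
  set v := l.take (d + n) with hv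
  have hvlen : v.length = d + n := by
    simp only [hv, List.length_take, hll]
    omega
  have hv1 : v = a.take d ++ comp bar a := by
    rw [hv, List.take_add, ← hdJ, htca]
    congr 1
    rw [← hta, List.take_take, Nat.min_eq_left (le_of_lt hdn)]
  have hv2 : v = a ++ (l.drop n).take d := by
    rw [hv, show d + n = n + d from by omega, List.take_add, hta]
  set x := (l.drop n).take d with hx
  have F : a.take d ++ comp bar a = a ++ x := hv1.symm.trans hv2
  have G : comp bar a = a.drop d ++ x := by
    have h1 : (a.take d ++ comp bar a).drop d = comp bar a := by
      rw [List.drop_append]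
      simp [List.length_take, Nat.min_eq_left (show d ≤ a.length from by omega)]
    have h2 : (a ++ x).drop d = a.drop d ++ x := by
      rw [List.drop_append, show d - a.length = 0 from by omega]
      simp
    rw [← h1, F, h2]
  have H : comp bar (a.drop d) = a.drop d := by
    rw [comp_drop, G, List.take_append]
    simp [List.length_drop]
  have hca : comp bar a = comp bar (a.drop d) ++ comp bar (a.take d) := by
    rw [← comp_append, List.take_append_drop]
  have hvv : comp bar v = v := by
    rw [hv1, comp_append, comp_comp bar hbar, hca, H, ← List.append_assoc,
      List.take_append_drop]
  have hocc : comp bar a <+: v.drop p := by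
    have hvd : v.drop p = (w.drop J').take (d + n - p) := by
      rw [hv, List.drop_take, hdJ']
    rw [hvd]
    exact List.prefix_take_iff.mpr ⟨hJ', by rw [comp_length]; omega⟩
  have hflip := occ_flip bar hocc
  rw [hvv, comp_comp bar hbar, comp_length, hvlen,
    show d + n - p - n = d - p from by omega] at hflip
  have h2 : v.drop (d - p) <+: w.drop (i + (J - J')) := by
    rw [hv, List.drop_take, hl, List.drop_drop,
      show i + (d - p) = i + (J - J') from by omega]
    exact List.take_prefix _ _
  exact hflip.trans h2

/-- If `‾a` occurs at two positions `J' < J` and `w` is non-crossing, then any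
occurrence of `a` ends before position `J`. -/
lemma core (bar : S → S) (hbar : Function.Involutive bar) {a w : List S}
    (hnc : NonCrossing bar a w) {J' J : ℕ}
    (hJ' : comp bar a <+: w.drop J') (hJ : comp bar a <+: w.drop J) (hJ'J : J' < J)
    {i : ℕ} (hi : a <+: w.drop i) : i + a.length ≤ J := by
  by_contra hover
  push_neg at hover
  have key : ∀ k (i : ℕ), J' - i ≤ k → a <+: w.drop i → J < i + a.length → False := by
    intro k
    induction k with
    | zero =>
      intro i hk hi hov
      have h1 : i ≤ J' := hnc i J' hi hJ'
      have h2 := step bar hbar hi hJ' hJ h1 hJ'J hov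
      have h3 : i + (J - J') ≤ J' := hnc _ J' h2 hJ'
      omega
    | succ k ih =>
      intro i hk hi hov
      have h1 : i ≤ J' := hnc i J' hi hJ'
      have h2 := step bar hbar hi hJ' hJ h1 hJ'J hov
      have h3 : i + (J - J') ≤ J' := hnc _ J' h2 hJ'
      exact ih (i + (J - J')) (by omega) h2 (by omega)
  exact key (J' - i) i le_rfl hi hover

lemma nc_comp (bar : S → S) (hbar : Function.Involutive bar) {a w : List S}
    (hna : a ≠ []) (hnc : NonCrossing bar a w) : NonCrossing bar a (comp bar w) := by
  intro p q hp hq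
  have hn : 0 < a.length := List.length_pos_iff.mpr hna
  have l1 := hp.length_le
  have l2 := hq.length_le
  simp only [comp_length, List.length_drop] at l1 l2
  have h1 := occ_flip bar hp
  have h2 := occ_flip bar hq
  simp only [comp_comp bar hbar, comp_length] at h1 h2
  have h3 := hnc _ _ h2 h1
  omega

lemma core' (bar : S → S) (hbar : Function.Involutive bar) {a w : List S}
    (hna : a ≠ []) (hnc : NonCrossing bar a w) {i i' j : ℕ}
    (hi : a <+: w.drop i) (hi' : a <+: w.drop i') (hii : i < i')
    (hj : comp bar a <+: w.drop j) : i + a.length ≤ j := by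
  have hn : 0 < a.length := List.length_pos_iff.mpr hna
  have hnc' := nc_comp bar hbar hna hnc
  have f1 := occ_flip bar hi
  have f2 := occ_flip bar hi'
  have f3 := occ_flip bar hj
  simp only [comp_comp bar hbar, comp_length] at f1 f2 f3
  have l1 := hi.length_le
  have l2 := hi'.length_le
  have l3 := hj.length_le
  simp only [comp_length, List.length_drop] at l1 l2 l3
  have := core bar hbar hnc' f2 f1 (by omega) f3
  omega

theorem stmt6 (bar : S → S) (hbar : Function.Involutive bar)
    (a w : List S) (ha : a ≠ comp bar a)
    (hp : a <+: w) (hs : comp bar a <:+ w)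
    (hnc : NonCrossing bar a w)
    (hP2 : ∃ x ∈ Pa a w, ∃ y ∈ Pa a w, x ≠ y)
    (hS2 : ∃ x ∈ Sa bar a w, ∃ y ∈ Sa bar a w, x ≠ y) :
    insert w { z | HC bar a w z } =
      insert w ((fun u => w ++ comp bar u) '' Pa a w ∪
        (fun v => v ++ w) '' barSa bar a w) := by
  have hna : a ≠ [] := by
    intro h
    exact ha (by simp [h, comp])
  ext z
  simp only [Set.mem_insert_iff, Set.mem_setOf_eq, Set.mem_union, Set.mem_image]
  constructor
  · rintro (rfl | h)
    · left; rfl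
    · rcases h with ⟨γ, β, hw, rfl⟩ | ⟨γ, β, hw, rfl⟩
      · right; left
        exact ⟨γ, ⟨β ++ comp bar a, by simp [hw]⟩, rfl⟩
      · right; right
        exact ⟨γ, ⟨a ++ β, by simp [hw]⟩, rfl⟩
  · rintro (rfl | ⟨u, hu, rfl⟩ | ⟨v, hv, rfl⟩)
    · left; rfl
    · by_cases hu0 : u = []
      · left; simp [hu0, comp]
      · right; left
        obtain ⟨r, hr⟩ := hu
        have hia : a <+: w.drop u.length := by
          rw [← hr, List.append_assoc, List.drop_left]
          exact ⟨r, rfl⟩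
        obtain ⟨q, hq⟩ := hs
        have hJ : comp bar a <+: w.drop q.length := by
          rw [← hq, List.drop_left]
        obtain ⟨x1, hx1, x2, hx2, hxne⟩ := hS2
        obtain ⟨q1, hq1⟩ := hx1
        obtain ⟨q2, hq2⟩ := hx2
        have hJ1 : comp bar a <+: w.drop q1.length := by
          rw [← hq1, List.drop_left]
          exact ⟨x1, rfl⟩
        have hJ2 : comp bar a <+: w.drop q2.length := by
          rw [← hq2, List.drop_left]
          exact ⟨x2, rfl⟩
        have lq := congrArg List.length hq
        have lq1 := congrArg List.length hq1
        have lq2 := congrArg List.length hq2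
        have lr := congrArg List.length hr
        simp only [List.length_append, comp_length] at lq lq1 lq2 lr
        have hxlen : x1.length ≠ x2.length := by
          intro h
          apply hxne
          have s1 : x1 <:+ w := ⟨q1 ++ comp bar a, by simp [← hq1, List.append_assoc]⟩
          have s2 : x2 <:+ w := ⟨q2 ++ comp bar a, by simp [← hq2, List.append_assoc]⟩
          exact suffix_eq_of_length s1 s2 h
        have hkey : u.length + a.length ≤ q.length := by
          by_cases hc : q1.length < q.length
          · exact core bar hbar hnc hJ1 hJ hc hia
          · exact core bar hbar hnc hJ2 hJ (by omega) hia
        have hdropr : r.drop (r.length - a.length) = comp bar a := by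
          have e0 : w.drop q.length = comp bar a := by rw [← hq, List.drop_left]
          have e1 : w.drop q.length = r.drop (q.length - (u.length + a.length)) := by
            rw [← hr, List.drop_append,
              List.drop_eq_nil_of_le (by simp only [List.length_append]; omega)]
            simp
          rw [e1, show q.length - (u.length + a.length) = r.length - a.length from by omega]
            at e0
          exact e0
        refine ⟨u, r.take (r.length - a.length), ?_, rfl⟩
        have hrr : r = r.take (r.length - a.length) ++ comp bar a := by
          conv_lhs => rw [← List.take_append_drop (r.length - a.length) r]
          rw [hdropr]
        rw [← hr]
        conv_lhs => rw [hrr]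
        simp [List.append_assoc]
    · by_cases hv0 : v = []
      · left; simp [hv0]
      · right; right
        obtain ⟨q, hq⟩ := hv
        have hj : comp bar a <+: w.drop q.length := by
          rw [← hq, List.drop_left]
          exact ⟨comp bar v, rfl⟩
        have hi0 : a <+: w.drop 0 := by simpa using hp
        obtain ⟨u1, hu1, u2, hu2, hune⟩ := hP2
        obtain ⟨t1, ht1⟩ := hu1
        obtain ⟨t2, ht2⟩ := hu2
        have hia1 : a <+: w.drop u1.length := by
          rw [← ht1, List.append_assoc, List.drop_left]
          exact ⟨t1, rfl⟩
        have hia2 : a <+: w.drop u2.length := by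
          rw [← ht2, List.append_assoc, List.drop_left]
          exact ⟨t2, rfl⟩
        have hulen : u1.length ≠ u2.length := by
          intro h
          apply hune
          have p1 : u1 <+: w := (List.prefix_append u1 a).trans ⟨t1, ht1⟩
          have p2 : u2 <+: w := (List.prefix_append u2 a).trans ⟨t2, ht2⟩
          exact prefix_eq_of_length p1 p2 h
        have hkey : a.length ≤ q.length := by
          by_cases hc : 0 < u1.length
          · simpa using core' bar hbar hna hnc hi0 hia1 hc hj
          · simpa using core' bar hbar hna hnc hi0 hia2 (by omega) hj
        have hqa : q.take a.length = a := by
          have h0 : w.take a.length = a := (List.prefix_iff_eq_take.mp hp).symm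
          rw [← hq, List.take_append,
            show a.length - q.length = 0 from by omega] at h0
          simpa using h0
        refine ⟨v, q.drop a.length, ?_, rfl⟩
        have hqd : q = a ++ q.drop a.length := by
          conv_lhs => rw [← List.take_append_drop a.length q]
          rw [hqa]
        rw [← hq]
        conv_lhs => rw [hqd]
        simp [List.append_assoc]

end Hairpin
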